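/- Let B' be the blow-up of K2 ∪ K2 with four parts V1, V2, V3, V4 each of size n/4 + O(1) (so the parts V1,V2 are completely joined, the parts V3,V4 are completely joined, and there are no other edges). Let Λ(G) denote the number of 4-subsets of V(G) inducing a copy of P3 ∪ K1 (the disjoint union of a path on three vertices and an isolated vertex). Then for any two distinct vertices x, y of B', flipping the adjacency of the pair {x,y} decreases Λ by at least n²/16 + O(n): specifically, Λ(B') − Λ(B' ⊕ xy) equals 3n²/16 + O(n) if x,y lie in two joined parts, n²/16 + O(n) if x,y lie in two different non-joined parts, and n²/8 + O(n) if x,y lie in the same part. -/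

import Mathlib

/-- The adjacency pattern of the graph `K2 ∪ K2` on parts `{0,1}` and `{2,3}`. -/
def matched (a b : Fin 4) : Prop :=
  (a.val = 0 ∧ b.val = 1) ∨ (a.val = 1 ∧ b.val = 0) ∨
  (a.val = 2 ∧ b.val = 3) ∨ (a.val = 3 ∧ b.val = 2)

/-- The blow-up of `K2 ∪ K2` with parts given by the colouring `P`. -/
def blowK2K2 (n : ℕ) (P : Fin n → Fin 4) : SimpleGraph (Fin n) where
  Adj u v := matched (P u) (P v)
  symm := ⟨by intro u v h; unfold matched at *; tauto⟩
  loopless := ⟨by intro v h; unfold matched at h; omega⟩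

/-- The graph `P3 ∪ K1`: a path `0-1-2` plus the isolated vertex `3`. -/
def P3K1 : SimpleGraph (Fin 4) where
  Adj u v := (u.val = 0 ∧ v.val = 1) ∨ (u.val = 1 ∧ v.val = 0) ∨
    (u.val = 1 ∧ v.val = 2) ∨ (u.val = 2 ∧ v.val = 1)
  symm := ⟨by intro u v h; tauto⟩
  loopless := ⟨by intro v h; omega⟩

/-- The number of 4-subsets of the vertex set inducing a copy of `P3 ∪ K1`. -/
noncomputable def countP3K1 (n : ℕ) (G : SimpleGraph (Fin n)) : ℕ :=
  Nat.card {X : Finset (Fin n) // X.card = 4 ∧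
    Nonempty (G.induce (↑X : Set (Fin n)) ≃g P3K1)}

/-- Flip the adjacency of the single pair `{x, y}` in `G`. -/
noncomputable def flipEdge {V : Type} (G : SimpleGraph V) (x y : V) : SimpleGraph V :=
  letI := Classical.dec (G.Adj x y)
  if G.Adj x y then G \ SimpleGraph.edge x y else G ⊔ SimpleGraph.edge x y

/-! ### Auxiliary material -/

open Finset

instance matched.dec : ∀ a b, Decidable (matched a b) := fun a b => by
  unfold matched; infer_instance

instance P3K1.adjDec : DecidableRel P3K1.Adj := fun a b =>
  decidable_of_iff ((a.val = 0 ∧ b.val = 1) ∨ (a.val = 1 ∧ b.val = 0) ∨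
    (a.val = 1 ∧ b.val = 2) ∨ (a.val = 2 ∧ b.val = 1)) Iff.rfl

lemma matched_irrefl (a : Fin 4) : ¬ matched a a := by unfold matched; omega

lemma matched_comm (a b : Fin 4) : matched a b ↔ matched b a := by
  unfold matched; tauto

lemma blow_adj {n : ℕ} (P : Fin n → Fin 4) (w z : Fin n) :
    (blowK2K2 n P).Adj w z ↔ matched (P w) (P z) := Iff.rfl

def pRel (a b s t : Fin 4) (fl : Bool) (i j : Fin 4) : Prop :=
  if (i = 0 ∧ j = 1) ∨ (i = 1 ∧ j = 0) then
    (if fl then ¬ matched a b else matched a b)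
  else matched (![a,b,s,t] i) (![a,b,s,t] j)

instance pRel.dec : ∀ a b s t fl i j, Decidable (pRel a b s t fl i j) := fun a b s t fl i j => by
  unfold pRel; infer_instance

def qP (a b s t : Fin 4) (fl : Bool) : Prop :=
  ∃ σ : Equiv.Perm (Fin 4), ∀ i j, pRel a b s t fl i j ↔ P3K1.Adj (σ i) (σ j)

instance qP.dec : ∀ a b s t fl, Decidable (qP a b s t fl) := fun a b s t fl => by
  unfold qP; infer_instance

def qB (a b s t : Fin 4) (fl : Bool) : Bool := decide (qP a b s t fl)

lemma qB_iff (a b s t : Fin 4) (fl : Bool) : qB a b s t fl = true ↔ qP a b s t fl := by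
  simp [qB]

def goodK {n : ℕ} (K : SimpleGraph (Fin n)) (X : Finset (Fin n)) : Prop :=
  X.card = 4 ∧ Nonempty (K.induce (↑X : Set (Fin n)) ≃g P3K1)

lemma flipEdge_adj {V : Type} [DecidableEq V] (G : SimpleGraph V) (x y : V) (hxy : x ≠ y)
    (w z : V) :
    (flipEdge G x y).Adj w z ↔
      (if (w = x ∧ z = y) ∨ (w = y ∧ z = x) then ¬ G.Adj x y else G.Adj w z) := by
  unfold flipEdge
  by_cases hG : G.Adj x y
  · rw [if_pos hG, SimpleGraph.sdiff_adj, SimpleGraph.edge_adj]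
    by_cases h : (w = x ∧ z = y) ∨ (w = y ∧ z = x)
    · rw [if_pos h]
      have hwz : w ≠ z := by
        rcases h with ⟨rfl, rfl⟩ | ⟨rfl, rfl⟩
        · exact hxy
        · exact Ne.symm hxy
      have hadj : G.Adj w z := by
        rcases h with ⟨rfl, rfl⟩ | ⟨rfl, rfl⟩
        · exact hG
        · exact hG.symm
      simp [hadj, h, hwz, hG]
    · rw [if_neg h]
      constructor
      · exact fun hh => hh.1
      · exact fun hh => ⟨hh, fun hc => h hc.1⟩
  · rw [if_neg hG, SimpleGraph.sup_adj, SimpleGraph.edge_adj]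
    by_cases h : (w = x ∧ z = y) ∨ (w = y ∧ z = x)
    · rw [if_pos h]
      have hwz : w ≠ z := by
        rcases h with ⟨rfl, rfl⟩ | ⟨rfl, rfl⟩
        · exact hxy
        · exact Ne.symm hxy
      exact ⟨fun _ => hG, fun _ => Or.inr ⟨h, hwz⟩⟩
    · rw [if_neg h]
      constructor
      · rintro (hh | ⟨hh, -⟩)
        · exact hh
        · exact absurd hh h
      · exact Or.inl

lemma card_four {n : ℕ} {x y u v : Fin n}
    (hxy : x ≠ y) (hxu : x ≠ u) (hxv : x ≠ v) (hyu : y ≠ u) (hyv : y ≠ v) (huv : u ≠ v) :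
    ({x,y,u,v} : Finset (Fin n)).card = 4 := by
  rw [card_insert_of_notMem (by simp [hxy, hxu, hxv]),
      card_insert_of_notMem (by simp [hyu, hyv]),
      card_insert_of_notMem (by simp [huv]), card_singleton]

lemma nonempty_iso_iff {n : ℕ} (K : SimpleGraph (Fin n)) (x y u v : Fin n)
    (hxy : x ≠ y) (hxu : x ≠ u) (hxv : x ≠ v) (hyu : y ≠ u) (hyv : y ≠ v) (huv : u ≠ v)
    (R : Fin 4 → Fin 4 → Prop)
    (hR : ∀ i j, K.Adj (![x,y,u,v] i) (![x,y,u,v] j) ↔ R i j) :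
    Nonempty (K.induce (↑({x,y,u,v} : Finset (Fin n)) : Set (Fin n)) ≃g P3K1) ↔
      ∃ σ : Equiv.Perm (Fin 4), ∀ i j, R i j ↔ P3K1.Adj (σ i) (σ j) := by
  classical
  set q : Fin 4 → Fin n := ![x,y,u,v] with hqdef
  have hq : Function.Injective q := by
    intro i j h
    fin_cases i <;> fin_cases j <;> simp_all [hqdef] <;>
      first
        | rfl
        | exact absurd h (by assumption)
        | exact absurd h.symm (by assumption)
  set X : Finset (Fin n) := {x,y,u,v} with hXdef
  have hmem : ∀ i, q i ∈ (↑X : Set (Fin n)) := by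
    intro i; fin_cases i <;> simp [hXdef, hqdef]
  have hcardX : X.card = 4 := card_four hxy hxu hxv hyu hyv huv
  have hcard : Fintype.card (↑X : Set (Fin n)) = 4 := by
    rw [← Set.toFinset_card, Finset.toFinset_coe, hcardX]
  let f : Fin 4 → (↑X : Set (Fin n)) := fun i => ⟨q i, hmem i⟩
  have hfinj : Function.Injective f := fun i j h => hq (congrArg Subtype.val h)
  have hfbij : Function.Bijective f :=
    (Fintype.bijective_iff_injective_and_card f).mpr ⟨hfinj, by simp [hcard, hcardX]⟩
  let e : Fin 4 ≃ (↑X : Set (Fin n)) := Equiv.ofBijective f hfbij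
  have hecoe : ∀ i, ((e i : (↑X : Set (Fin n))) : Fin n) = q i := fun i => rfl
  let φ : K.comap q ≃g K.induce (↑X : Set (Fin n)) :=
    { toEquiv := e
      map_rel_iff' := by
        intro i j
        show K.Adj ((e i : (↑X : Set (Fin n))) : Fin n) ((e j : (↑X : Set (Fin n))) : Fin n) ↔
          K.Adj (q i) (q j)
        rw [hecoe, hecoe] }
  have hNE : Nonempty (K.induce (↑X : Set (Fin n)) ≃g P3K1) ↔
      Nonempty (K.comap q ≃g P3K1) :=
    ⟨fun ⟨ψ⟩ => ⟨φ.trans ψ⟩, fun ⟨ψ⟩ => ⟨(φ.symm).trans ψ⟩⟩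
  rw [hNE]
  constructor
  · rintro ⟨ψ⟩
    refine ⟨ψ.toEquiv, fun i j => ?_⟩
    rw [← hR i j]
    have := ψ.map_rel_iff (a := i) (b := j)
    simpa [SimpleGraph.comap] using this.symm
  · rintro ⟨σ, hσ⟩
    refine ⟨⟨σ, ?_⟩⟩
    intro i j
    simp only [SimpleGraph.comap]
    exact ((hR i j).trans (hσ i j)).symm

lemma good_blow {n : ℕ} (P : Fin n → Fin 4) (x y u v : Fin n)
    (hxy : x ≠ y) (hxu : x ≠ u) (hxv : x ≠ v) (hyu : y ≠ u) (hyv : y ≠ v) (huv : u ≠ v) :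
    Nonempty ((blowK2K2 n P).induce (↑({x,y,u,v} : Finset (Fin n)) : Set (Fin n)) ≃g P3K1) ↔
      qP (P x) (P y) (P u) (P v) false := by
  rw [nonempty_iso_iff _ x y u v hxy hxu hxv hyu hyv huv
    (pRel (P x) (P y) (P u) (P v) false)]
  · rfl
  · intro i j
    fin_cases i <;> fin_cases j <;>
      simp [pRel, blow_adj, matched_irrefl, matched_comm]

lemma good_flip {n : ℕ} (P : Fin n → Fin 4) (x y u v : Fin n)
    (hxy : x ≠ y) (hxu : x ≠ u) (hxv : x ≠ v) (hyu : y ≠ u) (hyv : y ≠ v) (huv : u ≠ v) :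
    Nonempty ((flipEdge (blowK2K2 n P) x y).induce
        (↑({x,y,u,v} : Finset (Fin n)) : Set (Fin n)) ≃g P3K1) ↔
      qP (P x) (P y) (P u) (P v) true := by
  rw [nonempty_iso_iff _ x y u v hxy hxu hxv hyu hyv huv
    (pRel (P x) (P y) (P u) (P v) true)]
  · rfl
  · intro i j
    fin_cases i <;> fin_cases j <;>
      simp [pRel, flipEdge_adj _ x y hxy, blow_adj, matched_irrefl, matched_comm,
        hxy, hxu, hxv, hyu, hyv, huv,
        Ne.symm hxy, Ne.symm hxu, Ne.symm hxv, Ne.symm hyu, Ne.symm hyv, Ne.symm huv]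

open Classical in
lemma hcount {n : ℕ} (K : SimpleGraph (Fin n)) :
    countP3K1 n K = (univ.filter (fun X => goodK K X)).card := by
  rw [countP3K1, Nat.card_eq_fintype_card]
  convert Fintype.card_subtype (p := fun X : Finset (Fin n) => goodK K X)
  exact Iff.rfl

open Classical in
lemma two_mul_count {n : ℕ} (P : Fin n → Fin 4) (K : SimpleGraph (Fin n)) (x y : Fin n)
    (hxy : x ≠ y) (q : Fin 4 → Fin 4 → Bool)
    (hgood : ∀ u v : Fin n, u ≠ v → u ≠ x → u ≠ y → v ≠ x → v ≠ y →
      (goodK K (insert x (insert y ({u,v} : Finset (Fin n)))) ↔ q (P u) (P v) = true)) :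
    2 * (univ.filter (fun X : Finset (Fin n) => goodK K X ∧ x ∈ X ∧ y ∈ X)).card
      = ∑ st : Fin 4 × Fin 4, (if q st.1 st.2 = true then
          ((univ \ {x,y}).filter (fun w => P w = st.1)).card *
            ((univ \ {x,y}).filter (fun w => P w = st.2)).card -
          (if st.1 = st.2 then ((univ \ {x,y}).filter (fun w => P w = st.1)).card else 0)
          else 0) := by
  set s0 : Finset (Fin n) := univ \ {x,y} with hs0
  have hmem_s0 : ∀ z, z ∈ s0 ↔ z ≠ x ∧ z ≠ y := by
    intro z; simp [hs0]
  have hkey : ∀ Z : Finset (Fin n), Z ⊆ s0 → (((insert x (insert y Z)).erase x).erase y = Z) := by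
    intro Z hZ
    have hxZ : x ∉ Z := fun h => ((hmem_s0 x).1 (hZ h)).1 rfl
    have hyZ : y ∉ Z := fun h => ((hmem_s0 y).1 (hZ h)).2 rfl
    rw [Finset.erase_insert (by simp [hxy, hxZ] : x ∉ insert y Z), Finset.erase_insert hyZ]
  have h1 : (univ.filter (fun X : Finset (Fin n) => goodK K X ∧ x ∈ X ∧ y ∈ X)).card
      = ((s0.powersetCard 2).filter (fun Z => goodK K (insert x (insert y Z)))).card := by
    rw [eq_comm]
    apply Finset.card_bij (fun Z _ => insert x (insert y Z))
    · intro Z hZ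
      simp only [mem_filter, mem_powersetCard] at hZ
      simp only [mem_filter, mem_univ, true_and]
      exact ⟨hZ.2, by simp, by simp⟩
    · intro Z1 h1' Z2 h2' h
      simp only [mem_filter, mem_powersetCard] at h1' h2'
      rw [← hkey Z1 h1'.1.1, ← hkey Z2 h2'.1.1, h]
    · intro X hX
      simp only [mem_filter, mem_univ, true_and] at hX
      obtain ⟨hg, hx, hy⟩ := hX
      refine ⟨(X.erase x).erase y, ?_, ?_⟩
      · simp only [mem_filter, mem_powersetCard]
        have hsub : (X.erase x).erase y ⊆ s0 := by
          intro z hz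
          simp only [mem_erase] at hz
          exact (hmem_s0 z).2 ⟨hz.2.1, hz.1⟩
        have hyex : y ∈ X.erase x := by simp [hy, Ne.symm hxy]
        have hcard2 : ((X.erase x).erase y).card = 2 := by
          rw [Finset.card_erase_of_mem hyex, Finset.card_erase_of_mem hx, hg.1]
        refine ⟨⟨hsub, hcard2⟩, ?_⟩
        have : insert x (insert y ((X.erase x).erase y)) = X := by
          rw [Finset.insert_erase hyex, Finset.insert_erase hx]
        rw [this]; exact hg
      · rw [Finset.insert_erase (by simp [hy, Ne.symm hxy]),
            Finset.insert_erase hx]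
  have h2 : (s0.offDiag.filter (fun p : Fin n × Fin n =>
        goodK K (insert x (insert y ({p.1, p.2} : Finset (Fin n)))))).card
      = 2 * ((s0.powersetCard 2).filter (fun Z => goodK K (insert x (insert y Z)))).card := by
    rw [Finset.card_eq_sum_card_fiberwise
      (f := fun p : Fin n × Fin n => ({p.1, p.2} : Finset (Fin n)))
      (t := (s0.powersetCard 2).filter (fun Z => goodK K (insert x (insert y Z))))]
    · rw [Finset.sum_congr rfl (g := fun _ => 2), Finset.sum_const, smul_eq_mul, mul_comm]
      intro Z hZ
      simp only [mem_filter, mem_powersetCard] at hZ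
      obtain ⟨⟨hZs, hZ2⟩, hZg⟩ := hZ
      obtain ⟨u, v, huv, rfl⟩ := Finset.card_eq_two.1 hZ2
      have hus : u ∈ s0 := hZs (by simp)
      have hvs : v ∈ s0 := hZs (by simp)
      have : (s0.offDiag.filter (fun p : Fin n × Fin n =>
          goodK K (insert x (insert y ({p.1, p.2} : Finset (Fin n)))))).filter
            (fun p => ({p.1, p.2} : Finset (Fin n)) = {u, v}) = {(u,v), (v,u)} := by
        ext p
        simp only [mem_filter, mem_offDiag, mem_insert, mem_singleton]
        constructor
        · rintro ⟨⟨⟨-, -, hpne⟩, -⟩, hpe⟩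
          have h1m : p.1 ∈ ({u,v} : Finset (Fin n)) := by rw [← hpe]; simp
          have h2m : p.2 ∈ ({u,v} : Finset (Fin n)) := by rw [← hpe]; simp
          simp only [mem_insert, mem_singleton] at h1m h2m
          rcases h1m with h1m | h1m <;> rcases h2m with h2m | h2m
          · exact absurd (h1m.trans h2m.symm) hpne
          · left; exact Prod.ext h1m h2m
          · right; exact Prod.ext h1m h2m
          · exact absurd (h1m.trans h2m.symm) hpne
        · rintro (rfl | rfl)
          · exact ⟨⟨⟨hus, hvs, huv⟩, hZg⟩, rfl⟩
          · exact ⟨⟨⟨hvs, hus, huv.symm⟩, by rwa [Finset.pair_comm]⟩, Finset.pair_comm v u⟩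
      rw [this]
      rw [Finset.card_insert_of_notMem (by simp [Prod.ext_iff]; intro h; exact absurd h huv),
        Finset.card_singleton]
    · intro p hp
      simp only [mem_coe, mem_filter, mem_offDiag] at hp
      obtain ⟨⟨hp1, hp2, hpne⟩, hpg⟩ := hp
      simp only [mem_coe, mem_filter, mem_powersetCard]
      exact ⟨⟨by intro z hz; simp at hz; rcases hz with rfl | rfl <;> assumption,
        Finset.card_pair hpne⟩, hpg⟩
  have h3 : (s0.offDiag.filter (fun p : Fin n × Fin n =>
        goodK K (insert x (insert y ({p.1, p.2} : Finset (Fin n)))))).card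
      = (s0.offDiag.filter (fun p : Fin n × Fin n => q (P p.1) (P p.2) = true)).card := by
    congr 1
    apply Finset.filter_congr
    intro p hp
    simp only [mem_offDiag] at hp
    obtain ⟨hp1, hp2, hpne⟩ := hp
    rw [hmem_s0] at hp1 hp2
    exact (by simpa using hgood p.1 p.2 hpne hp1.1 hp1.2 hp2.1 hp2.2 : _)
  have h4 : (s0.offDiag.filter (fun p : Fin n × Fin n => q (P p.1) (P p.2) = true)).card
      = ∑ st : Fin 4 × Fin 4, (if q st.1 st.2 = true then
          (s0.filter (fun w => P w = st.1)).card * (s0.filter (fun w => P w = st.2)).card -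
          (if st.1 = st.2 then (s0.filter (fun w => P w = st.1)).card else 0) else 0) := by
    rw [Finset.card_eq_sum_card_fiberwise
      (f := fun p : Fin n × Fin n => (P p.1, P p.2)) (t := univ) (fun _ _ => mem_univ _)]
    apply Finset.sum_congr rfl
    rintro ⟨s1, s2⟩ -
    simp only []
    by_cases hq : q s1 s2 = true
    · rw [if_pos hq]
      have hset : ((s0.offDiag.filter (fun p : Fin n × Fin n => q (P p.1) (P p.2) = true)).filter
          (fun p => (P p.1, P p.2) = (s1, s2)))
          = ((s0.filter (fun w => P w = s1)) ×ˢ (s0.filter (fun w => P w = s2))).filter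
            (fun p => p.1 ≠ p.2) := by
        ext p
        simp only [mem_filter, mem_offDiag, mem_product, Prod.ext_iff]
        constructor
        · rintro ⟨⟨⟨hp1, hp2, hne⟩, -⟩, h1', h2'⟩
          exact ⟨⟨⟨hp1, h1'⟩, hp2, h2'⟩, hne⟩
        · rintro ⟨⟨⟨hp1, h1'⟩, hp2, h2'⟩, hne⟩
          refine ⟨⟨⟨hp1, hp2, hne⟩, ?_⟩, h1', h2'⟩
          rw [h1', h2']; exact hq
      rw [hset]
      by_cases hst : s1 = s2
      · subst hst
        rw [if_pos rfl]
        have : ((s0.filter (fun w => P w = s1)) ×ˢ (s0.filter (fun w => P w = s1))).filter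
            (fun p : Fin n × Fin n => p.1 ≠ p.2) = (s0.filter (fun w => P w = s1)).offDiag := by
            ext p; simp [mem_offDiag, and_assoc]
        rw [this, Finset.offDiag_card]
      · rw [if_neg hst]
        have : ((s0.filter (fun w => P w = s1)) ×ˢ (s0.filter (fun w => P w = s2))).filter
            (fun p : Fin n × Fin n => p.1 ≠ p.2)
            = (s0.filter (fun w => P w = s1)) ×ˢ (s0.filter (fun w => P w = s2)) := by
          apply Finset.filter_true_of_mem
          intro p hp
          simp only [mem_product, mem_filter] at hp
          intro h
          exact hst (by rw [← hp.1.2, ← hp.2.2, h])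
        rw [this, Finset.card_product, Nat.sub_zero]
    · rw [if_neg hq]
      convert Finset.card_empty
      rw [Finset.eq_empty_iff_forall_notMem]
      intro p hp
      simp only [mem_filter, Prod.ext_iff] at hp
      obtain ⟨⟨-, hqp⟩, h1', h2'⟩ := hp
      rw [h1', h2'] at hqp
      exact hq hqp
  rw [h1, ← h2, h3, h4]

lemma prod_bound (a b m c' : ℝ) (ha : |a - m| ≤ c') (hb : |b - m| ≤ c') (hb0 : 0 ≤ b)
    (hm : 0 ≤ m) : |a*b - m^2| ≤ 2*m*c' + c'^2 := by
  have h : a*b - m^2 = (a - m)*b + m*(b - m) := by ring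
  rw [h]
  have hc0 : 0 ≤ c' := le_trans (abs_nonneg _) ha
  calc |(a - m) * b + m * (b - m)|
      ≤ |(a - m) * b| + |m * (b - m)| := abs_add_le _ _
    _ = |a - m| * b + m * |b - m| := by
        rw [abs_mul, abs_mul, abs_of_nonneg hb0, abs_of_nonneg hm]
    _ ≤ c' * (m + c') + m * c' := by
        have hbu : b ≤ m + c' := by have := abs_le.1 hb; linarith
        have h1 : |a - m| * b ≤ c' * (m + c') := mul_le_mul ha hbu hb0 hc0
        have h2 : m * |b - m| ≤ m * c' := mul_le_mul_of_nonneg_left hb hm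
        linarith
    _ = 2 * m * c' + c' ^ 2 := by ring


set_option maxHeartbeats 4000000 in
lemma core_est (a b : Fin 4) (r : Fin 4 → ℝ) (nn cc : ℝ) (hn1 : 1 ≤ nn) (hc : 0 ≤ cc)
    (hr : ∀ s, |r s - nn/4| ≤ cc + 2) (hr0 : ∀ s, (0:ℝ) ≤ r s) (D : ℝ)
    (key : 2*D = (∑ st : Fin 4 × Fin 4, (if qB a b st.1 st.2 false = true then
            (r st.1 * r st.2 - (if st.1 = st.2 then r st.1 else 0)) else 0))
        - (∑ st : Fin 4 × Fin 4, (if qB a b st.1 st.2 true = true then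
            (r st.1 * r st.2 - (if st.1 = st.2 then r st.1 else 0)) else 0))) :
    |D - (if matched a b then 3*nn^2/16 else if a = b then nn^2/8 else nn^2/16)| ≤
      20*(cc+3)^2*nn := by
  have hprod : ∀ s t, |r s * r t - (nn/4)^2| ≤ 2*(nn/4)*(cc+2) + (cc+2)^2 := fun s t =>
    prod_bound _ _ _ _ (hr s) (hr t) (hr0 t) (by linarith)
  have hCB : 16*(2*(nn/4)*(cc+2) + (cc+2)^2) + nn + 4*(nn/4 + (cc+2))
      ≤ 2*(20*(cc+3)^2)*nn := by
    nlinarith [mul_nonneg (sub_nonneg.2 hn1) (sq_nonneg (cc+2)),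
      mul_nonneg (sub_nonneg.2 hn1) (by positivity : (0:ℝ) ≤ 4*cc+8), hc, hn1, sq_nonneg (cc+3)]
  have hp := fun s t => abs_le.1 (hprod s t)
  have hl := fun s => abs_le.1 (hr s)
  have h4 : ∀ z : Fin 4, z = 0 ∨ z = 1 ∨ z = 2 ∨ z = 3 := by decide
  rcases h4 a with rfl | rfl | rfl | rfl <;> rcases h4 b with rfl | rfl | rfl | rfl <;>
  · simp (config := { decide := true }) only [Fintype.sum_prod_type, Fin.sum_univ_four,
      if_true, if_false] at key ⊢
    rw [abs_le]
    constructor <;>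
      linarith [key, hCB, hn1, hc,
        (hp 0 0).1, (hp 0 0).2, (hp 0 1).1, (hp 0 1).2, (hp 0 2).1, (hp 0 2).2,
        (hp 0 3).1, (hp 0 3).2, (hp 1 0).1, (hp 1 0).2, (hp 1 1).1, (hp 1 1).2,
        (hp 1 2).1, (hp 1 2).2, (hp 1 3).1, (hp 1 3).2, (hp 2 0).1, (hp 2 0).2,
        (hp 2 1).1, (hp 2 1).2, (hp 2 2).1, (hp 2 2).2, (hp 2 3).1, (hp 2 3).2,
        (hp 3 0).1, (hp 3 0).2, (hp 3 1).1, (hp 3 1).2, (hp 3 2).1, (hp 3 2).2,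
        (hp 3 3).1, (hp 3 3).2,
        (hl 0).1, (hl 0).2, (hl 1).1, (hl 1).2, (hl 2).1, (hl 2).2, (hl 3).1, (hl 3).2,
        hr0 0, hr0 1, hr0 2, hr0 3]

theorem stmt_12 (c : ℝ) (hc : 0 ≤ c) :
    ∃ C : ℝ, ∀ (n : ℕ) (P : Fin n → Fin 4),
      (∀ i : Fin 4, |((Finset.univ.filter fun v => P v = i).card : ℝ) - (n : ℝ) / 4| ≤ c) →
      ∀ x y : Fin n, x ≠ y →
        ((n : ℝ)^2 / 16 - C * n ≤
            (countP3K1 n (blowK2K2 n P) : ℝ) - (countP3K1 n (flipEdge (blowK2K2 n P) x y) : ℝ)) ∧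
        (matched (P x) (P y) →
          |((countP3K1 n (blowK2K2 n P) : ℝ) - (countP3K1 n (flipEdge (blowK2K2 n P) x y) : ℝ))
            - 3 * (n : ℝ)^2 / 16| ≤ C * n) ∧
        (P x ≠ P y → ¬ matched (P x) (P y) →
          |((countP3K1 n (blowK2K2 n P) : ℝ) - (countP3K1 n (flipEdge (blowK2K2 n P) x y) : ℝ))
            - (n : ℝ)^2 / 16| ≤ C * n) ∧
        (P x = P y →
          |((countP3K1 n (blowK2K2 n P) : ℝ) - (countP3K1 n (flipEdge (blowK2K2 n P) x y) : ℝ))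
            - (n : ℝ)^2 / 8| ≤ C * n) := by
  classical
  refine ⟨20*(c+3)^2, ?_⟩
  intro n P hP x y hxy
  have hn1 : (1:ℝ) ≤ (n:ℝ) := by
    have hn : n ≠ 0 := fun h => (h ▸ x).elim0
    exact_mod_cast Nat.one_le_iff_ne_zero.2 hn
  set G : SimpleGraph (Fin n) := blowK2K2 n P with hGdef
  set G' : SimpleGraph (Fin n) := flipEdge (blowK2K2 n P) x y with hG'def
  set k : Fin 4 → ℕ := fun s => ((univ \ {x,y}).filter (fun w => P w = s)).card with hkdef
  -- class size bounds
  have hr : ∀ s, |(k s : ℝ) - (n:ℝ)/4| ≤ c + 2 := by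
    intro s
    have hm := hP s
    have h1 : k s ≤ (univ.filter (fun w => P w = s)).card :=
      card_le_card (filter_subset_filter _ sdiff_subset)
    have h2 : (univ.filter (fun w => P w = s)).card ≤ k s + 2 := by
      have hsub : univ.filter (fun w => P w = s) ⊆
          ((univ \ {x,y}).filter (fun w => P w = s)) ∪ {x,y} := by
        intro z hz
        simp only [mem_filter, mem_univ, true_and] at hz
        by_cases hzxy : z ∈ ({x,y} : Finset (Fin n))
        · exact mem_union_right _ hzxy
        · refine mem_union_left _ ?_
          simp only [mem_filter, mem_sdiff, mem_univ, true_and]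
          exact ⟨hzxy, hz⟩
      calc (univ.filter (fun w => P w = s)).card
          ≤ (((univ \ {x,y}).filter (fun w => P w = s)) ∪ {x,y}).card := card_le_card hsub
        _ ≤ k s + ({x,y} : Finset (Fin n)).card := card_union_le _ _
        _ = k s + 2 := by rw [card_pair hxy]
    have c1 : (k s : ℝ) ≤ (univ.filter (fun w => P w = s)).card := by exact_mod_cast h1
    have c2 : ((univ.filter (fun w => P w = s)).card : ℝ) ≤ (k s : ℝ) + 2 := by exact_mod_cast h2
    rw [abs_le] at hm ⊢
    constructor <;> linarith [hm.1, hm.2]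
  have hk0 : ∀ s, (0:ℝ) ≤ (k s : ℝ) := fun s => Nat.cast_nonneg _
  have hprod : ∀ s t, |(k s : ℝ)*(k t : ℝ) - ((n:ℝ)/4)^2| ≤ 2*((n:ℝ)/4)*(c+2) + (c+2)^2 := by
    intro s t
    exact prod_bound _ _ _ _ (hr s) (hr t) (hk0 t) (by linarith)
  -- goodness transfer
  have hgoodG : ∀ u v : Fin n, u ≠ v → u ≠ x → u ≠ y → v ≠ x → v ≠ y →
      (goodK G (insert x (insert y ({u,v} : Finset (Fin n)))) ↔
        qB (P x) (P y) (P u) (P v) false = true) := by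
    intro u v huv hux huy hvx hvy
    have hc4 := card_four hxy (Ne.symm hux) (Ne.symm hvx) (Ne.symm huy) (Ne.symm hvy) huv
    rw [qB_iff]
    constructor
    · intro h
      exact (good_blow P x y u v hxy (Ne.symm hux) (Ne.symm hvx) (Ne.symm huy)
        (Ne.symm hvy) huv).1 h.2
    · intro h
      exact ⟨hc4, (good_blow P x y u v hxy (Ne.symm hux) (Ne.symm hvx) (Ne.symm huy)
        (Ne.symm hvy) huv).2 h⟩
  have hgoodG' : ∀ u v : Fin n, u ≠ v → u ≠ x → u ≠ y → v ≠ x → v ≠ y →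
      (goodK G' (insert x (insert y ({u,v} : Finset (Fin n)))) ↔
        qB (P x) (P y) (P u) (P v) true = true) := by
    intro u v huv hux huy hvx hvy
    have hc4 := card_four hxy (Ne.symm hux) (Ne.symm hvx) (Ne.symm huy) (Ne.symm hvy) huv
    rw [qB_iff]
    constructor
    · intro h
      exact (good_flip P x y u v hxy (Ne.symm hux) (Ne.symm hvx) (Ne.symm huy)
        (Ne.symm hvy) huv).1 h.2
    · intro h
      exact ⟨hc4, (good_flip P x y u v hxy (Ne.symm hux) (Ne.symm hvx) (Ne.symm huy)
        (Ne.symm hvy) huv).2 h⟩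
  have hBG := two_mul_count P G x y hxy (fun s t => qB (P x) (P y) s t false) hgoodG
  have hBG' := two_mul_count P G' x y hxy (fun s t => qB (P x) (P y) s t true) hgoodG'
  -- split counts
  have hsplit : ∀ K : SimpleGraph (Fin n), (univ.filter (fun X => goodK K X)).card
      = (univ.filter (fun X : Finset (Fin n) => goodK K X ∧ ¬(x ∈ X ∧ y ∈ X))).card
        + (univ.filter (fun X : Finset (Fin n) => goodK K X ∧ (x ∈ X ∧ y ∈ X))).card := by
    intro K
    have := Finset.card_filter_add_card_filter_not
      (s := univ.filter (fun X : Finset (Fin n) => goodK K X))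
      (p := fun X => x ∈ X ∧ y ∈ X)
    rw [filter_filter, filter_filter] at this
    omega
  have houtside : (univ.filter (fun X : Finset (Fin n) => goodK G X ∧ ¬(x ∈ X ∧ y ∈ X))).card
      = (univ.filter (fun X : Finset (Fin n) => goodK G' X ∧ ¬(x ∈ X ∧ y ∈ X))).card := by
    congr 1
    apply Finset.filter_congr
    intro X _
    by_cases hb : x ∈ X ∧ y ∈ X
    · simp [hb]
    · simp only [hb, not_false_iff, and_true]
      have hind : G.induce (↑X : Set (Fin n)) = G'.induce (↑X : Set (Fin n)) := by
        ext uu vv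
        show G.Adj uu.val vv.val ↔ G'.Adj uu.val vv.val
        rw [hG'def, flipEdge_adj _ x y hxy]
        have hcond : ¬((uu.val = x ∧ vv.val = y) ∨ (uu.val = y ∧ vv.val = x)) := by
          rintro (⟨h1, h2⟩ | ⟨h1, h2⟩)
          · exact hb ⟨by rw [← h1]; exact uu.2, by rw [← h2]; exact vv.2⟩
          · exact hb ⟨by rw [← h2]; exact vv.2, by rw [← h1]; exact uu.2⟩
        rw [if_neg hcond]
      unfold goodK
      rw [hind]
  -- the master identity over ℕ
  have eqG : 2 * countP3K1 n G
      = 2 * (univ.filter (fun X : Finset (Fin n) => goodK G X ∧ ¬(x ∈ X ∧ y ∈ X))).card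
        + ∑ st : Fin 4 × Fin 4, (if qB (P x) (P y) st.1 st.2 false = true then
            k st.1 * k st.2 - (if st.1 = st.2 then k st.1 else 0) else 0) := by
    rw [hcount G, hsplit G, Nat.mul_add, hBG]
  have eqG' : 2 * countP3K1 n G'
      = 2 * (univ.filter (fun X : Finset (Fin n) => goodK G X ∧ ¬(x ∈ X ∧ y ∈ X))).card
        + ∑ st : Fin 4 × Fin 4, (if qB (P x) (P y) st.1 st.2 true = true then
            k st.1 * k st.2 - (if st.1 = st.2 then k st.1 else 0) else 0) := by
    rw [hcount G', hsplit G', Nat.mul_add, hBG', houtside]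
  -- cast to ℝ
  have hcast : ∀ fl : Bool,
      ((∑ st : Fin 4 × Fin 4, (if qB (P x) (P y) st.1 st.2 fl = true then
          k st.1 * k st.2 - (if st.1 = st.2 then k st.1 else 0) else 0) : ℕ) : ℝ)
      = ∑ st : Fin 4 × Fin 4, (if qB (P x) (P y) st.1 st.2 fl = true then
          ((k st.1 : ℝ) * (k st.2 : ℝ) - (if st.1 = st.2 then (k st.1 : ℝ) else 0)) else 0) := by
    intro fl
    rw [Nat.cast_sum]
    apply Finset.sum_congr rfl
    rintro ⟨s1, s2⟩ -
    simp only []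
    by_cases hq : qB (P x) (P y) s1 s2 fl = true
    · rw [if_pos hq, if_pos hq]
      by_cases hst : s1 = s2
      · subst hst
        rw [if_pos rfl, if_pos rfl]
        have hle : k s1 ≤ k s1 * k s1 := by
          rcases Nat.eq_zero_or_pos (k s1) with h | h
          · simp [h]
          · exact Nat.le_mul_of_pos_left _ h
        rw [Nat.cast_sub hle]
        push_cast
        ring
      · rw [if_neg hst, if_neg hst, Nat.sub_zero]
        push_cast
        ring
    · rw [if_neg hq, if_neg hq]
      norm_num
  have key : 2*((countP3K1 n G : ℝ) - (countP3K1 n G' : ℝ))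
      = (∑ st : Fin 4 × Fin 4, (if qB (P x) (P y) st.1 st.2 false = true then
          ((k st.1 : ℝ) * (k st.2 : ℝ) - (if st.1 = st.2 then (k st.1 : ℝ) else 0)) else 0))
        - (∑ st : Fin 4 × Fin 4, (if qB (P x) (P y) st.1 st.2 true = true then
          ((k st.1 : ℝ) * (k st.2 : ℝ) - (if st.1 = st.2 then (k st.1 : ℝ) else 0)) else 0)) := by
    have r1 : (2:ℝ) * (countP3K1 n G : ℝ)
        = 2 * ((univ.filter (fun X : Finset (Fin n) => goodK G X ∧ ¬(x ∈ X ∧ y ∈ X))).card : ℝ)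
          + ((∑ st : Fin 4 × Fin 4, (if qB (P x) (P y) st.1 st.2 false = true then
              k st.1 * k st.2 - (if st.1 = st.2 then k st.1 else 0) else 0) : ℕ) : ℝ) := by
      exact_mod_cast congrArg (fun m : ℕ => (m : ℝ)) eqG
    have r2 : (2:ℝ) * (countP3K1 n G' : ℝ)
        = 2 * ((univ.filter (fun X : Finset (Fin n) => goodK G X ∧ ¬(x ∈ X ∧ y ∈ X))).card : ℝ)
          + ((∑ st : Fin 4 × Fin 4, (if qB (P x) (P y) st.1 st.2 true = true then
              k st.1 * k st.2 - (if st.1 = st.2 then k st.1 else 0) else 0) : ℕ) : ℝ) := by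
      exact_mod_cast congrArg (fun m : ℕ => (m : ℝ)) eqG'
    rw [hcast] at r1 r2
    linarith
  -- core estimate
  have core := core_est (P x) (P y) (fun s => (k s : ℝ)) (n:ℝ) c hn1 hc hr hk0
    ((countP3K1 n G : ℝ) - (countP3K1 n G' : ℝ)) key
  refine ⟨?_, ?_, ?_, ?_⟩
  · have hT : (if matched (P x) (P y) then 3*(n:ℝ)^2/16 else
        if P x = P y then (n:ℝ)^2/8 else (n:ℝ)^2/16) ≥ (n:ℝ)^2/16 := by
      split_ifs <;> nlinarith [sq_nonneg (n:ℝ)]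
    have h2 := (abs_le.1 core).1
    linarith
  · intro hm
    rw [if_pos hm] at core
    exact core
  · intro hne hnm
    rw [if_neg hnm, if_neg hne] at core
    exact core
  · intro heq
    have hnm : ¬ matched (P x) (P y) := by rw [heq]; exact matched_irrefl _
    rw [if_neg hnm, if_pos heq] at core
    exact core
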